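/- arXiv:1901.03264 — 2 statements merged into one kernel-verified Lean document; each statement's English description precedes it below -/
import Mathlib

section
/- Let X be a real random variable with E[X] = 0 and |X| ≤ A almost surely (A > 0), and let f_Y(y) = (1/√(2π)) E[exp(−(y−X)²/2)]. Fix κ ∈ (0, 1/√(2π)) and let R > A + (log(1/(2πκ²)))^{1/2}. Then all real solutions of f_Y(y) = κ lie in [−R, R], and for every s > 1 the number of real zeros of f_Y − κ is at most 1 + ( ((A+R)s + A)²/2 + 2A² + log(2 + (A+R)s/A) ) / log s. -/
set_option maxHeartbeats 1000000

open MeasureTheory Real Metric Set Filter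

private lemma exists_factor : ∀ (T : Finset ℂ) (f : ℂ → ℂ), Differentiable ℂ f →
    (∀ t ∈ T, f t = 0) →
    ∃ h : ℂ → ℂ, Differentiable ℂ h ∧ ∀ z, f z = h z * ∏ t ∈ T, (z - t) := by
  intro T
  induction T using Finset.induction_on with
  | empty => exact fun f hf _ => ⟨f, hf, fun z => by simp⟩
  | @insert a T' ha ih =>
    intro f hf hz
    have hfa : f a = 0 := hz a (Finset.mem_insert_self a T')
    set g := dslope f a with hg
    have hgd : Differentiable ℂ g := by
      rw [← differentiableOn_univ]
      exact (Complex.differentiableOn_dslope (by simp : (univ : Set ℂ) ∈ nhds a)).2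
        hf.differentiableOn
    have hfactor : ∀ z, f z = (z - a) * g z := by
      intro z
      have h1 := sub_smul_dslope f a z
      rw [hfa, sub_zero] at h1
      simpa [smul_eq_mul, hg] using h1.symm
    have hz' : ∀ t ∈ T', g t = 0 := by
      intro t ht
      have hta : t ≠ a := fun h => ha (h ▸ ht)
      have h2 := hfactor t
      rw [hz t (Finset.mem_insert_of_mem ht)] at h2
      rcases mul_eq_zero.1 h2.symm with h3 | h3
      · exact absurd h3 (sub_ne_zero.2 hta)
      · exact h3
    obtain ⟨h, hh, hhf⟩ := ih g hgd hz'
    refine ⟨h, hh, fun z => ?_⟩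
    rw [Finset.prod_insert ha, hfactor z, hhf z]; ring

private lemma count_zeros (f : ℂ → ℂ) (hf : Differentiable ℂ f) (c : ℂ) (r s M : ℝ)
    (hr : 0 < r) (hs : 1 < s) (T : Finset ℂ)
    (hTz : ∀ t ∈ T, f t = 0) (hTb : ∀ t ∈ T, dist t c ≤ r)
    (hM : ∀ z ∈ Metric.closedBall c (s * r), ‖f z‖ ≤ M)
    (hfc : f c ≠ 0) :
    (T.card : ℝ) * Real.log s ≤ Real.log M - Real.log ‖f c‖ := by
  have hs0 : (0:ℝ) < s := lt_trans one_pos hs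
  set ρ : ℝ := s * r with hρdef
  have hρ : 0 < ρ := mul_pos hs0 hr
  have hrρ : r < ρ := by nlinarith
  obtain ⟨h, hh, hfh⟩ := exists_factor T f hf hTz
  set n := T.card with hn
  set H : ℂ → ℂ := fun z =>
    h z * ∏ t ∈ T, (((ρ:ℂ))^2 - (starRingEnd ℂ) (t - c) * (z - c)) with hH
  have hHd : Differentiable ℂ H := by
    apply hh.mul
    apply Differentiable.fun_finset_prod
    intro t _
    exact (differentiable_const _).sub
      ((differentiable_const _).mul ((differentiable_id.sub (differentiable_const c))))
  -- boundary bound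
  have hbound : ∀ z ∈ Metric.sphere c ρ, ‖H z‖ ≤ M * ρ^n := by
    intro z hz
    have hzc : ‖z - c‖ = ρ := by
      simpa [Complex.dist_eq] using (mem_sphere_iff_norm.1 hz)
    have hmem : z ∈ Metric.closedBall c (s * r) := by
      have : dist z c = ρ := by simpa [Complex.dist_eq] using hzc
      rw [Metric.mem_closedBall, this]
    have hfz : ‖f z‖ ≤ M := hM z hmem
    have key : ∀ t ∈ T, (((ρ:ℂ))^2 - (starRingEnd ℂ) (t - c) * (z - c))
        = (z - c) * (starRingEnd ℂ) (z - t) := by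
      intro t _
      have h1 : (z - c) * (starRingEnd ℂ) (z - c) = ((ρ:ℂ))^2 := by
        rw [Complex.mul_conj, Complex.normSq_eq_norm_sq]
        rw [hzc]
        push_cast; ring
      have h2 : (starRingEnd ℂ) (z - t)
          = (starRingEnd ℂ) (z - c) - (starRingEnd ℂ) (t - c) := by
        rw [← map_sub]; ring_nf
      rw [h2, mul_sub, ← h1]; ring
    have hprod : ∏ t ∈ T, (((ρ:ℂ))^2 - (starRingEnd ℂ) (t - c) * (z - c))
        = (z - c)^n * ∏ t ∈ T, (starRingEnd ℂ) (z - t) := by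
      rw [Finset.prod_congr rfl key, Finset.prod_mul_distrib, Finset.prod_const, hn]
    have hnorm : ‖H z‖ = ρ^n * ‖f z‖ := by
      rw [hH]
      simp only []
      rw [norm_mul, hprod, norm_mul, norm_pow, hzc, norm_prod]
      have : ∏ t ∈ T, ‖(starRingEnd ℂ) (z - t)‖ = ∏ t ∈ T, ‖z - t‖ := by
        apply Finset.prod_congr rfl; intro t _; exact RCLike.norm_conj _
      rw [this, hfh z, norm_mul, norm_prod]
      ring
    rw [hnorm]
    have : ρ^n * ‖f z‖ ≤ ρ^n * M := by
      apply mul_le_mul_of_nonneg_left hfz (pow_nonneg hρ.le n)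
    linarith
  -- max modulus
  have hHc : ‖H c‖ ≤ M * ρ^n := by
    apply Complex.norm_le_of_forall_mem_frontier_norm_le Metric.isBounded_ball
      hHd.diffContOnCl
    · intro z hz
      rw [frontier_ball c hρ.ne'] at hz
      exact hbound z hz
    · rw [closure_ball c hρ.ne']
      exact Metric.mem_closedBall_self hρ.le
  -- evaluate H at c
  have hHceval : ‖H c‖ = ‖h c‖ * (ρ^n * ρ^n) := by
    have : H c = h c * ((ρ:ℂ)^2)^n := by
      rw [hH]; simp [Finset.prod_const, hn]
    rw [this, norm_mul, norm_pow, norm_pow, Complex.norm_real, Real.norm_eq_abs, abs_of_pos hρ]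
    ring
  have hhc : ‖h c‖ * ρ^n ≤ M := by
    have hρn : (0:ℝ) < ρ^n := pow_pos hρ n
    rw [hHceval] at hHc
    nlinarith [hHc, hρn, norm_nonneg (h c)]
  have hfc_le : ‖f c‖ ≤ ‖h c‖ * r^n := by
    rw [hfh c, norm_mul, norm_prod]
    apply mul_le_mul_of_nonneg_left _ (norm_nonneg _)
    calc ∏ t ∈ T, ‖c - t‖ ≤ ∏ t ∈ T, r := by
          apply Finset.prod_le_prod (fun t _ => norm_nonneg _)
          intro t ht
          have := hTb t ht
          rwa [dist_comm, Complex.dist_eq] at this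
    _ = r^n := by rw [Finset.prod_const, hn]
  have key : s^n * ‖f c‖ ≤ M := by
    calc s^n * ‖f c‖ ≤ s^n * (‖h c‖ * r^n) := by
          apply mul_le_mul_of_nonneg_left hfc_le (pow_nonneg hs0.le n)
    _ = ‖h c‖ * ρ^n := by rw [hρdef, mul_pow]; ring
    _ ≤ M := hhc
  have hfc0 : (0:ℝ) < ‖f c‖ := norm_pos_iff.2 hfc
  have hM0 : (0:ℝ) < M := lt_of_lt_of_le (mul_pos (pow_pos hs0 n) hfc0) key
  have hlog := Real.log_le_log (mul_pos (pow_pos hs0 n) hfc0) key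
  rw [Real.log_mul (pow_pos hs0 n).ne' hfc0.ne', Real.log_pow] at hlog
  linarith

private lemma hexp_le_one (y x : ℝ) : Real.exp (-(y - x)^2/2) ≤ 1 :=
  Real.exp_le_one_iff.2 (by nlinarith [sq_nonneg (y - x)])

private lemma exp_measurable {Ω : Type*} [MeasurableSpace Ω] {X : Ω → ℝ} (hX : Measurable X)
    (y : ℝ) : Measurable fun ω => Real.exp (-(y - X ω)^2/2) :=
  Real.measurable_exp.comp (((measurable_const.sub hX).pow_const 2).neg.div_const 2)

private lemma exp_integrable {Ω : Type*} [MeasurableSpace Ω] (μ : Measure Ω)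
    [IsProbabilityMeasure μ] {X : Ω → ℝ} (hX : Measurable X) (y : ℝ) :
    Integrable (fun ω => Real.exp (-(y - X ω)^2/2)) μ := by
  apply Integrable.mono' (integrable_const (1:ℝ)) (exp_measurable hX y).aestronglyMeasurable
  filter_upwards with ω
  rw [Real.norm_eq_abs, abs_of_pos (Real.exp_pos _)]
  exact hexp_le_one _ _

private lemma hasDerivAt_real_exp (x y : ℝ) :
    HasDerivAt (fun y => Real.exp (-(y - x)^2/2)) ((x - y) * Real.exp (-(y - x)^2/2)) y := by
  have h2 : HasDerivAt (fun y : ℝ => y - x) 1 y := (hasDerivAt_id y).sub_const x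
  have h1 : HasDerivAt (fun y : ℝ => -(y - x)^2/2) (x - y) y := by
    have h3 := (h2.fun_pow 2).neg.div_const 2
    exact h3.congr_deriv (by simp; ring)
  have h4 := h1.exp
  convert h4 using 1; ring

private lemma hasDerivAt_complex_exp (x : ℝ) (z : ℂ) :
    HasDerivAt (fun z : ℂ => ((x:ℂ) - z) * Complex.exp (-(z - x)^2/2))
      ((((x:ℂ) - z)^2 - 1) * Complex.exp (-(z - x)^2/2)) z := by
  have h1 : HasDerivAt (fun z : ℂ => (x:ℂ) - z) (-1) z := by
    simpa using (hasDerivAt_id z).const_sub (x:ℂ)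
  have h2 : HasDerivAt (fun z : ℂ => -(z - x)^2/2) (-(z - (x:ℂ))) z := by
    have h3 : HasDerivAt (fun z : ℂ => z - (x:ℂ)) 1 z := (hasDerivAt_id z).sub_const _
    have h4 := (h3.fun_pow 2).neg.div_const 2
    exact h4.congr_deriv (by simp; ring)
  have h5 := h2.cexp
  have h6 := h1.fun_mul h5
  exact h6.congr_deriv (by ring)

private lemma norm_cexp_le (w : ℂ) (x : ℝ) :
    ‖Complex.exp (-(w - x)^2/2)‖ ≤ Real.exp ((w.im)^2/2) := by
  rw [Complex.norm_exp]
  apply Real.exp_le_exp.2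
  have h : (-(w - (x:ℂ))^2/2) = ((2⁻¹:ℝ) : ℂ) * (-((w - x)*(w - x))) := by push_cast; ring
  rw [h, Complex.re_ofReal_mul]
  have h2 : ((-((w - (x:ℂ))*(w - x)))).re = -((w.re - x)*(w.re - x) - w.im*w.im) := by
    simp [Complex.mul_re]
  rw [h2]
  nlinarith [sq_nonneg (w.re - x)]

private lemma key_bound {Ω : Type*} [MeasurableSpace Ω] (μ : Measure Ω) [IsProbabilityMeasure μ]
    (X : Ω → ℝ) (hXmeas : Measurable X) (A : ℝ) (hA : 0 < A)
    (hmean : ∫ ω, X ω ∂μ = 0) (hbd : ∀ᵐ ω ∂μ, |X ω| ≤ A)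
    (K R : ℝ) (hR0 : 0 < R)
    (s : ℝ) (hs : 1 < s)
    (S : Finset ℝ)
    (hS : ∀ y ∈ S, (∫ ω, Real.exp (-(y - X ω) ^ 2 / 2) ∂μ) = K)
    (hSR : ∀ y ∈ S, y ∈ Set.Icc (-R) R) :
    (S.card : ℝ) ≤ 1 + (((A + R) * s + A) ^ 2 / 2 + 2 * A ^ 2 +
          Real.log (2 + (A + R) * s / A)) / Real.log s := by
  classical
  have hs0 : (0:ℝ) < s := one_pos.trans hs
  have hlogs : 0 < Real.log s := Real.log_pos hs
  have hAR : 0 < A + R := by linarith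
  set ρ : ℝ := s * (A + R) with hρdef
  have hρ0 : 0 < ρ := mul_pos hs0 hAR
  set L : ℝ := s * (A + R) + 2 * A with hLdef
  have hL0 : 0 < L := by positivity
  -- numerator nonneg
  have hnum0 : 0 ≤ ((A + R) * s + A) ^ 2 / 2 + 2 * A ^ 2 + Real.log (2 + (A + R) * s / A) := by
    have h1 : 0 ≤ Real.log (2 + (A + R) * s / A) := by
      apply Real.log_nonneg
      have : 0 < (A + R) * s / A := by positivity
      linarith
    positivity
  by_cases hcard : S.card ≤ 1
  · have h2 : (S.card : ℝ) ≤ 1 := by exact_mod_cast hcard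
    have h3 : 0 ≤ (((A + R) * s + A) ^ 2 / 2 + 2 * A ^ 2 +
        Real.log (2 + (A + R) * s / A)) / Real.log s := div_nonneg hnum0 hlogs.le
    linarith
  push_neg at hcard
  have hne : S.Nonempty := Finset.card_pos.mp (by omega)
  -- definitions
  set g : ℝ → ℝ := fun y => ∫ ω, Real.exp (-(y - X ω)^2/2) ∂μ with hgdef
  set g' : ℝ → ℝ := fun y => ∫ ω, (X ω - y) * Real.exp (-(y - X ω)^2/2) ∂μ with hg'def
  set G : ℂ → ℂ := fun z => ∫ ω, ((X ω : ℂ) - z) * Complex.exp (-(z - X ω)^2/2) ∂μ with hGdef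
  have hXint : Integrable X μ :=
    Integrable.mono' (integrable_const A) hXmeas.aestronglyMeasurable
      (hbd.mono fun ω h => by rwa [Real.norm_eq_abs])
  have mder : ∀ y : ℝ, Measurable fun ω => (X ω - y) * Real.exp (-(y - X ω)^2/2) :=
    fun y => (hXmeas.sub measurable_const).mul (exp_measurable hXmeas y)
  have m0 : Measurable fun ω => ((X ω : ℝ) : ℂ) := Complex.measurable_ofReal.comp hXmeas
  have mG : ∀ z : ℂ, Measurable fun ω => ((X ω : ℂ) - z) * Complex.exp (-(z - (X ω:ℂ))^2/2) := by
    intro z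
    exact (m0.sub measurable_const).mul (Complex.measurable_exp.comp
      (((measurable_const.sub m0).pow_const 2).neg.div_const 2))
  have mG' : ∀ z : ℂ, Measurable fun ω =>
      (((X ω:ℂ) - z)^2 - 1) * Complex.exp (-(z - (X ω:ℂ))^2/2) := by
    intro z
    exact (((m0.sub measurable_const).pow_const 2).sub measurable_const).mul
      (Complex.measurable_exp.comp (((measurable_const.sub m0).pow_const 2).neg.div_const 2))
  -- derivative of g
  have hg : ∀ y₀ : ℝ, HasDerivAt g (g' y₀) y₀ := by
    intro y₀
    have key := hasDerivAt_integral_of_dominated_loc_of_deriv_le (μ := μ) (𝕜 := ℝ)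
      (F := fun (y : ℝ) ω => Real.exp (-(y - X ω)^2/2))
      (F' := fun (y : ℝ) ω => (X ω - y) * Real.exp (-(y - X ω)^2/2))
      (bound := fun _ => A + |y₀| + 1) (x₀ := y₀) (Metric.ball_mem_nhds y₀ zero_lt_one)
      (Eventually.of_forall fun y => (exp_measurable hXmeas y).aestronglyMeasurable)
      (exp_integrable μ hXmeas y₀)
      (mder y₀).aestronglyMeasurable
      ?_ (integrable_const _)
      (Eventually.of_forall fun ω y _ => hasDerivAt_real_exp (X ω) y)
    · exact key.2
    · filter_upwards [hbd] with ω hω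
      intro y hy
      rw [Metric.mem_ball, Real.dist_eq] at hy
      rw [Real.norm_eq_abs, abs_mul, abs_of_pos (Real.exp_pos _)]
      have h1 : |X ω - y| ≤ A + |y₀| + 1 := by
        have h2 : |y| - |y₀| ≤ |y - y₀| := abs_sub_abs_le_abs_sub y y₀
        have h3 : |X ω - y| ≤ |X ω| + |y| := abs_sub _ _
        linarith
      nlinarith [abs_nonneg (X ω - y), Real.exp_pos (-(y - X ω)^2/2),
        hexp_le_one y (X ω)]
  -- G is entire
  have hGdiff : Differentiable ℂ G := by
    intro z₀
    have key := hasDerivAt_integral_of_dominated_loc_of_deriv_le (μ := μ) (𝕜 := ℂ)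
      (F := fun (z : ℂ) ω => ((X ω : ℂ) - z) * Complex.exp (-(z - X ω)^2/2))
      (F' := fun (z : ℂ) ω => (((X ω:ℂ) - z)^2 - 1) * Complex.exp (-(z - X ω)^2/2))
      (bound := fun _ => ((A + ‖z₀‖ + 1)^2 + 1) * Real.exp ((‖z₀‖ + 1)^2/2))
      (x₀ := z₀) (Metric.ball_mem_nhds z₀ zero_lt_one)
      (Eventually.of_forall fun z => (mG z).aestronglyMeasurable)
      ?_ (mG' z₀).aestronglyMeasurable ?_ (integrable_const _)
      (Eventually.of_forall fun ω z _ => hasDerivAt_complex_exp (X ω) z)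
    · exact key.2.differentiableAt
    · -- integrability at z₀
      apply Integrable.mono' (integrable_const ((A + ‖z₀‖) * Real.exp (‖z₀‖^2/2)))
        (mG z₀).aestronglyMeasurable
      filter_upwards [hbd] with ω hω
      rw [norm_mul]
      have h1 : ‖(X ω:ℂ) - z₀‖ ≤ A + ‖z₀‖ := by
        refine (norm_sub_le _ _).trans ?_
        have : ‖((X ω : ℝ):ℂ)‖ = |X ω| := by rw [Complex.norm_real, Real.norm_eq_abs]
        rw [this]; linarith
      have h2 : ‖Complex.exp (-(z₀ - X ω)^2/2)‖ ≤ Real.exp (‖z₀‖^2/2) := by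
        refine (norm_cexp_le z₀ (X ω)).trans ?_
        apply Real.exp_le_exp.2
        have him : |z₀.im| ≤ ‖z₀‖ := by
          exact Complex.abs_im_le_norm z₀
        nlinarith [abs_nonneg z₀.im, norm_nonneg z₀, sq_abs z₀.im]
      have h3 : (0:ℝ) ≤ A + ‖z₀‖ := by positivity
      nlinarith [norm_nonneg ((X ω:ℂ) - z₀), Real.exp_pos (‖z₀‖^2/2),
        norm_nonneg (Complex.exp (-(z₀ - X ω)^2/2))]
    · -- bound on ball
      filter_upwards [hbd] with ω hω
      intro z hz
      rw [Metric.mem_ball, Complex.dist_eq] at hz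
      rw [norm_mul]
      have hzn : ‖z‖ ≤ ‖z₀‖ + 1 := by
        have h4 : ‖z - z₀‖ < 1 := by exact hz
        have := norm_sub_norm_le z z₀
        linarith
      have h1 : ‖(X ω:ℂ) - z‖ ≤ A + ‖z₀‖ + 1 := by
        refine (norm_sub_le _ _).trans ?_
        have : ‖((X ω : ℝ):ℂ)‖ = |X ω| := by rw [Complex.norm_real, Real.norm_eq_abs]
        rw [this]; linarith
      have h2 : ‖((X ω:ℂ) - z)^2 - 1‖ ≤ (A + ‖z₀‖ + 1)^2 + 1 := by
        refine (norm_sub_le _ _).trans ?_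
        rw [norm_pow, norm_one]
        have h5 : ‖(X ω:ℂ) - z‖^2 ≤ (A + ‖z₀‖ + 1)^2 := by
          apply pow_le_pow_left₀ (norm_nonneg _) h1
        linarith
      have h3 : ‖Complex.exp (-(z - X ω)^2/2)‖ ≤ Real.exp ((‖z₀‖ + 1)^2/2) := by
        refine (norm_cexp_le z (X ω)).trans ?_
        apply Real.exp_le_exp.2
        have him : |z.im| ≤ ‖z‖ := by
          exact Complex.abs_im_le_norm z
        have h6 : (0:ℝ) ≤ ‖z₀‖ + 1 := by positivity
        nlinarith [abs_nonneg z.im, sq_abs z.im]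
      have h7 : (0:ℝ) ≤ (A + ‖z₀‖ + 1)^2 + 1 := by positivity
      nlinarith [norm_nonneg (((X ω:ℂ) - z)^2 - 1), Real.exp_pos ((‖z₀‖ + 1)^2/2),
        norm_nonneg (Complex.exp (-(z - X ω)^2/2))]
  -- G on reals
  have hGR : ∀ y : ℝ, G ((y:ℝ):ℂ) = ((g' y : ℝ) : ℂ) := by
    intro y
    have hpt : ∀ ω, ((X ω :ℂ) - (y:ℂ)) * Complex.exp (-((y:ℂ) - X ω)^2/2)
        = (((X ω - y) * Real.exp (-(y - X ω)^2/2) : ℝ) : ℂ) := by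
      intro ω
      push_cast [Complex.ofReal_exp]
      ring_nf
    calc G ((y:ℝ):ℂ) = ∫ ω, (((X ω - y) * Real.exp (-(y - X ω)^2/2) : ℝ) : ℂ) ∂μ := by
          rw [hGdef]; exact integral_congr_ae (Eventually.of_forall hpt)
    _ = ((g' y : ℝ) : ℂ) := integral_ofReal
  -- lower bound at A
  have hint2 : Integrable (fun ω => (A - X ω) * Real.exp (-(A - X ω)^2/2)) μ := by
    apply Integrable.mono' (integrable_const (2*A))
      ((measurable_const.sub hXmeas).mul (exp_measurable hXmeas A)).aestronglyMeasurable
    filter_upwards [hbd] with ω hω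
    show ‖(A - X ω) * Real.exp (-(A - X ω)^2/2)‖ ≤ 2*A
    rw [Real.norm_eq_abs, abs_mul, abs_of_pos (Real.exp_pos _)]
    have h1 : |A - X ω| ≤ 2*A := by
      rcases abs_le.1 hω with ⟨h2, h3⟩
      rw [abs_le]; constructor <;> linarith
    nlinarith [abs_nonneg (A - X ω), Real.exp_pos (-(A - X ω)^2/2), hexp_le_one A (X ω)]
  have hlow : A * Real.exp (-(2*A^2)) ≤ ‖G ((A:ℝ):ℂ)‖ := by
    rw [hGR A, Complex.norm_real, Real.norm_eq_abs]
    have h1 : g' A = - ∫ ω, (A - X ω) * Real.exp (-(A - X ω)^2/2) ∂μ := by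
      rw [hg'def, ← integral_neg]
      apply integral_congr_ae
      filter_upwards with ω
      ring_nf
    have hint3 : Integrable (fun ω => Real.exp (-(2*A^2)) * (A - X ω)) μ := by
      have := ((integrable_const A).sub hXint).const_mul (Real.exp (-(2*A^2)))
      simpa using this
    have h2 : ∫ ω, Real.exp (-(2*A^2)) * (A - X ω) ∂μ
        ≤ ∫ ω, (A - X ω) * Real.exp (-(A - X ω)^2/2) ∂μ := by
      apply integral_mono_ae hint3 hint2
      filter_upwards [hbd] with ω hω
      rcases abs_le.1 hω with ⟨h3, h4⟩
      have h5 : 0 ≤ A - X ω := by linarith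
      have h6 : Real.exp (-(2*A^2)) ≤ Real.exp (-(A - X ω)^2/2) := by
        apply Real.exp_le_exp.2; nlinarith
      nlinarith [mul_le_mul_of_nonneg_left h6 h5]
    have h5 : ∫ ω, Real.exp (-(2*A^2)) * (A - X ω) ∂μ = Real.exp (-(2*A^2)) * A := by
      rw [integral_const_mul, integral_sub (integrable_const A) hXint, integral_const, hmean]
      simp [measure_univ]
    rw [h1, abs_neg]
    refine le_trans ?_ (le_abs_self _)
    rw [h5] at h2; linarith
  have hGA0 : G ((A:ℝ):ℂ) ≠ 0 := by
    intro h
    rw [h, norm_zero] at hlow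
    nlinarith [Real.exp_pos (-(2*A^2))]
  -- upper bound on closed ball
  have hMb : ∀ z ∈ Metric.closedBall ((A:ℝ):ℂ) (s * (A + R)),
      ‖G z‖ ≤ L * Real.exp (ρ^2/2) := by
    intro z hz
    rw [Metric.mem_closedBall, Complex.dist_eq] at hz
    rw [hGdef]
    refine (norm_integral_le_of_norm_le (integrable_const (L * Real.exp (ρ^2/2))) ?_).trans ?_
    · filter_upwards [hbd] with ω hω
      rw [norm_mul]
      have h1 : ‖(X ω:ℂ) - z‖ ≤ L := by
        have he : (X ω:ℂ) - z = ((X ω - A : ℝ):ℂ) + ((A:ℂ) - z) := by push_cast; ring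
        rw [he]
        refine (norm_add_le _ _).trans ?_
        have h2 : ‖((X ω - A : ℝ):ℂ)‖ ≤ 2*A := by
          rw [Complex.norm_real, Real.norm_eq_abs]
          rcases abs_le.1 hω with ⟨h3, h4⟩
          rw [abs_le]; constructor <;> linarith
        have h3 : ‖(A:ℂ) - z‖ ≤ ρ := by
          rw [norm_sub_rev]
          exact hz
        rw [hLdef]; linarith
      have h2 : ‖Complex.exp (-(z - X ω)^2/2)‖ ≤ Real.exp (ρ^2/2) := by
        refine (norm_cexp_le z (X ω)).trans ?_
        apply Real.exp_le_exp.2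
        have him : |z.im| ≤ ρ := by
          have h4 : |(z - ((A:ℝ):ℂ)).im| ≤ ‖z - ((A:ℝ):ℂ)‖ :=
            Complex.abs_im_le_norm _
          simpa [Complex.sub_im, Complex.ofReal_im] using h4.trans hz
        nlinarith [abs_nonneg z.im, sq_abs z.im]
      nlinarith [norm_nonneg ((X ω:ℂ) - z), Real.exp_pos (ρ^2/2),
        norm_nonneg (Complex.exp (-(z - X ω)^2/2))]
    · rw [integral_const]; simp [measure_univ]
  -- Rolle: construct zeros of g'
  set Smax := S.max' hne with hSmax
  have hprops : ∀ a ∈ S.erase Smax, (S.filter (fun b => a < b)).Nonempty := by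
    intro a ha
    have haS : a ∈ S := Finset.mem_of_mem_erase ha
    have hane : a ≠ Smax := Finset.ne_of_mem_erase ha
    have hle : a ≤ Smax := S.le_max' a haS
    exact ⟨Smax, Finset.mem_filter.2 ⟨S.max'_mem hne, lt_of_le_of_ne hle hane⟩⟩
  set nxt : ℝ → ℝ := fun a =>
    if h : (S.filter (fun b => a < b)).Nonempty then (S.filter (fun b => a < b)).min' h else 0
    with hnxt
  have hnxt_mem : ∀ a ∈ S.erase Smax, nxt a ∈ S ∧ a < nxt a ∧ ∀ b ∈ S, a < b → nxt a ≤ b := by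
    intro a ha
    have h := hprops a ha
    rw [hnxt]; simp only [dif_pos h]
    have h1 := Finset.min'_mem _ h
    rw [Finset.mem_filter] at h1
    refine ⟨h1.1, h1.2, fun b hb hab => ?_⟩
    exact Finset.min'_le _ b (Finset.mem_filter.2 ⟨hb, hab⟩)
  have hZero : ∀ a ∈ S.erase Smax, ∃ ξ, a < ξ ∧ ξ < nxt a ∧ g' ξ = 0 := by
    intro a ha
    obtain ⟨hmem, hlt, -⟩ := hnxt_mem a ha
    have haS : a ∈ S := Finset.mem_of_mem_erase ha
    obtain ⟨ξ, hξmem, hξ0⟩ := exists_hasDerivAt_eq_zero hlt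
      (fun x _ => (hg x).continuousAt.continuousWithinAt)
      (by rw [hgdef]; simp only []; rw [hS a haS, hS (nxt a) hmem])
      (fun x _ => hg x)
    exact ⟨ξ, hξmem.1, hξmem.2, hξ0⟩
  set ξf : ℝ → ℝ := fun a =>
    if h : ∃ ξ, a < ξ ∧ ξ < nxt a ∧ g' ξ = 0 then h.choose else 0 with hξfdef
  have hξf : ∀ a ∈ S.erase Smax, a < ξf a ∧ ξf a < nxt a ∧ g' (ξf a) = 0 := by
    intro a ha
    have h := hZero a ha
    rw [hξfdef]; simp only [dif_pos h]
    exact h.choose_spec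
  set T : Finset ℂ := (S.erase Smax).image (fun a => ((ξf a : ℝ) : ℂ)) with hT
  have hinj : Set.InjOn (fun a => ((ξf a : ℝ) : ℂ)) (S.erase Smax) := by
    intro a ha b hb hab
    simp only [Complex.ofReal_inj] at hab
    by_contra hne'
    rcases lt_or_gt_of_ne hne' with h | h
    · have h1 := (hξf a ha).2.1
      have h2 := (hnxt_mem a ha).2.2 b (Finset.mem_of_mem_erase hb) h
      have h3 := (hξf b hb).1
      rw [hab] at h1; linarith
    · have h1 := (hξf b hb).2.1
      have h2 := (hnxt_mem b hb).2.2 a (Finset.mem_of_mem_erase ha) h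
      have h3 := (hξf a ha).1
      rw [hab] at h3; linarith
  have hTcard : T.card = S.card - 1 := by
    rw [hT, Finset.card_image_of_injOn hinj, Finset.card_erase_of_mem (S.max'_mem hne)]
  -- apply the counting lemma
  have hcount := count_zeros G hGdiff ((A:ℝ):ℂ) (A + R) s (L * Real.exp (ρ^2/2))
    hAR hs T ?_ ?_ hMb hGA0
  rotate_left
  · -- zeros
    intro t ht
    rw [hT, Finset.mem_image] at ht
    obtain ⟨a, ha, rfl⟩ := ht
    rw [hGR (ξf a), (hξf a ha).2.2]
    simp
  · -- in ball
    intro t ht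
    rw [hT, Finset.mem_image] at ht
    obtain ⟨a, ha, rfl⟩ := ht
    have h1 := (hξf a ha).1
    have h2 := (hξf a ha).2.1
    have h3 := (hSR a (Finset.mem_of_mem_erase ha)).1
    have h4 := (hSR (nxt a) (hnxt_mem a ha).1).2
    rw [Complex.dist_eq]
    have he : ((ξf a : ℝ):ℂ) - ((A:ℝ):ℂ) = ((ξf a - A : ℝ):ℂ) := by push_cast; ring
    rw [he, Complex.norm_real, Real.norm_eq_abs]
    rw [abs_le]; constructor <;> linarith
  -- final arithmetic
  have h7 : Real.log (L * Real.exp (ρ^2/2)) = Real.log L + ρ^2/2 := by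
    rw [Real.log_mul hL0.ne' (Real.exp_pos _).ne', Real.log_exp]
  have h8 : Real.log A - 2*A^2 ≤ Real.log ‖G ((A:ℝ):ℂ)‖ := by
    have := Real.log_le_log (by positivity) hlow
    rwa [Real.log_mul hA.ne' (Real.exp_pos _).ne', Real.log_exp] at this
  have h10 : Real.log L - Real.log A = Real.log (2 + (A + R) * s / A) := by
    rw [← Real.log_div hL0.ne' hA.ne']
    congr 1
    rw [hLdef]; field_simp; ring
  have h11 : ρ^2 ≤ ((A + R) * s + A)^2 := by nlinarith
  have h12 : (T.card : ℝ) * Real.log s ≤ ((A + R) * s + A) ^ 2 / 2 + 2 * A ^ 2 +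
      Real.log (2 + (A + R) * s / A) := by
    rw [h7] at hcount
    linarith
  have h13 : (T.card : ℝ) ≤ (((A + R) * s + A) ^ 2 / 2 + 2 * A ^ 2 +
      Real.log (2 + (A + R) * s / A)) / Real.log s := by
    rw [le_div_iff₀ hlogs]; exact h12
  have h14 : (S.card : ℝ) = (T.card : ℝ) + 1 := by
    rw [hTcard]
    have : 1 ≤ S.card := by omega
    push_cast [Nat.cast_sub this]
    ring
  linarith

/-- for zero-mean `X` with `|X| ≤ A` a.s. (`A > 0`),
`κ ∈ (0, 1/√(2π))` and `R > A + √(log(1/(2πκ²)))`, all real solutions of `f_Y(y) = κ`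
lie in `[−R, R]`, they are finitely many, and for every `s > 1` their number is at most
`1 + ( ((A+R)s + A)²/2 + 2A² + log(2 + (A+R)s/A) ) / log s`. -/
theorem stmt_8 {Ω : Type*} [MeasurableSpace Ω] (μ : Measure Ω) [IsProbabilityMeasure μ]
    (X : Ω → ℝ) (hXmeas : Measurable X) (A : ℝ) (hA : 0 < A)
    (hmean : ∫ ω, X ω ∂μ = 0)
    (hbd : ∀ᵐ ω ∂μ, |X ω| ≤ A)
    (fY : ℝ → ℝ)
    (hfY : ∀ y : ℝ, fY y = (1 / Real.sqrt (2 * π)) * ∫ ω, Real.exp (-(y - X ω) ^ 2 / 2) ∂μ)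
    (κ : ℝ) (hκ : κ ∈ Set.Ioo 0 (1 / Real.sqrt (2 * π)))
    (R : ℝ) (hR : A + Real.sqrt (Real.log (1 / (2 * π * κ ^ 2))) < R) :
    {y : ℝ | fY y = κ} ⊆ Set.Icc (-R) R ∧
    {y : ℝ | fY y = κ}.Finite ∧
    ∀ s : ℝ, 1 < s →
      ({y : ℝ | fY y = κ}.ncard : ℝ) ≤
        1 + (((A + R) * s + A) ^ 2 / 2 + 2 * A ^ 2 +
          Real.log (2 + (A + R) * s / A)) / Real.log s := by
  have h2π : (0:ℝ) < 2*π := by positivity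
  have hsqrt : 0 < Real.sqrt (2*π) := Real.sqrt_pos.2 h2π
  have hκ0 : 0 < κ := hκ.1
  have hκ1 : κ < 1 / Real.sqrt (2*π) := hκ.2
  have hb1 : κ * Real.sqrt (2*π) < 1 := by
    rw [← lt_div_iff₀ hsqrt]; exact hκ1
  have h2πκ : 2*π*κ^2 < 1 := by nlinarith [Real.sq_sqrt h2π.le, mul_pos hκ0 hsqrt]
  have hκ2pos : (0:ℝ) < 2*π*κ^2 := by positivity
  have hlogpos : 0 < Real.log (1/(2*π*κ^2)) :=
    Real.log_pos ((one_lt_div hκ2pos).2 (by linarith))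
  set B := Real.sqrt (Real.log (1/(2*π*κ^2))) with hB
  have hBnn : 0 ≤ B := Real.sqrt_nonneg _
  have hB2 : B^2 = Real.log (1/(2*π*κ^2)) := Real.sq_sqrt hlogpos.le
  have hAR : A < R := by linarith
  have hR0 : 0 < R := by linarith
  have htrans : ∀ y : ℝ, fY y = κ ↔
      (∫ ω, Real.exp (-(y - X ω) ^ 2 / 2) ∂μ) = Real.sqrt (2*π) * κ := by
    intro y
    rw [hfY y, one_div, inv_mul_eq_iff_eq_mul₀ hsqrt.ne']
  have hsub : {y : ℝ | fY y = κ} ⊆ Set.Icc (-R) R := by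
    intro y hy
    rw [Set.mem_setOf_eq, htrans y] at hy
    rw [Set.mem_Icc]
    by_contra hmem
    push_neg at hmem
    have hyR : R < |y| := by
      rcases lt_or_ge y (-R) with h | h
      · have h1 : R < -y := by linarith
        exact h1.trans_le (neg_le_abs y)
      · exact (hmem h).trans_le (le_abs_self y)
    have hintle : (∫ ω, Real.exp (-(y - X ω) ^ 2 / 2) ∂μ) ≤ Real.exp (-(|y| - A)^2/2) := by
      have hae : ∀ᵐ ω ∂μ, Real.exp (-(y - X ω) ^ 2 / 2) ≤ Real.exp (-(|y| - A)^2/2) := by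
        filter_upwards [hbd] with ω hω
        apply Real.exp_le_exp.2
        have h1 : |y| - A ≤ |y - X ω| := by
          have h2 := abs_sub_abs_le_abs_sub y (X ω)
          linarith
        have h3 : 0 ≤ |y| - A := by linarith
        have h4 : (|y| - A)^2 ≤ (y - X ω)^2 := by
          rw [← sq_abs (y - X ω)]
          nlinarith [abs_nonneg (y - X ω)]
        linarith
      have h5 := integral_mono_ae (exp_integrable μ hXmeas y) (integrable_const _) hae
      simpa [integral_const, measure_univ] using h5
    have hlt : Real.exp (-(|y| - A)^2/2) < Real.sqrt (2*π) * κ := by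
      have h4 : Real.exp (-(|y| - A)^2/2) < Real.exp (-(B^2)/2) := by
        apply Real.exp_lt_exp.2
        have h5 : B < |y| - A := by linarith
        nlinarith
      have h5 : Real.exp (-(B^2)/2) = Real.sqrt (2*π) * κ := by
        have h6 : (1:ℝ)/(2*π*κ^2) = ((Real.sqrt (2*π) * κ)^2)⁻¹ := by
          rw [mul_pow, Real.sq_sqrt h2π.le]; field_simp
        rw [hB2, h6, Real.log_inv, Real.log_pow]
        push_cast
        rw [show -(-(2 * Real.log (Real.sqrt (2*π) * κ)))/2
            = Real.log (Real.sqrt (2*π) * κ) by ring]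
        exact Real.exp_log (mul_pos hsqrt hκ0)
      linarith
    rw [hy] at hintle
    linarith
  have hKbound : ∀ s : ℝ, 1 < s → ∀ Sf : Finset ℝ, (∀ y ∈ Sf, fY y = κ) →
      (Sf.card : ℝ) ≤ 1 + (((A + R) * s + A) ^ 2 / 2 + 2 * A ^ 2 +
          Real.log (2 + (A + R) * s / A)) / Real.log s := by
    intro s hs Sf hSf
    apply key_bound μ X hXmeas A hA hmean hbd (Real.sqrt (2*π)*κ) R hR0 s hs Sf
    · intro y hy; exact (htrans y).1 (hSf y hy)
    · intro y hy; exact hsub (hSf y hy)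
  have hfin : {y : ℝ | fY y = κ}.Finite := by
    by_contra hinf
    obtain ⟨Sf, hSfsub, hSfcard⟩ := Set.Infinite.exists_subset_card_eq hinf
      (Nat.ceil (1 + (((A + R) * 2 + A) ^ 2 / 2 + 2 * A ^ 2 +
          Real.log (2 + (A + R) * 2 / A)) / Real.log 2) + 1)
    have h1 := hKbound 2 one_lt_two Sf (fun y hy => hSfsub hy)
    rw [hSfcard] at h1
    push_cast at h1
    have h2 := Nat.le_ceil (1 + (((A + R) * 2 + A) ^ 2 / 2 + 2 * A ^ 2 +
          Real.log (2 + (A + R) * 2 / A)) / Real.log 2)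
    linarith
  refine ⟨hsub, hfin, ?_⟩
  intro s hs
  have h1 := hKbound s hs hfin.toFinset (fun y hy => (hfin.mem_toFinset).1 hy)
  rwa [Set.ncard_eq_toFinset_card _ hfin]
end

section
/- Let A ≥ 1 and let X be a real random variable with E[X] = 0 and |X| ≤ A almost surely, with output density f_Y(y) = (1/√(2π)) E[exp(−(y−X)²/2)] of the channel Y = X + Z, Z standard Gaussian independent of X. Suppose κ is a real number satisfying (2πe(1+A²))^{−1/2} ≤ κ ≤ (2πe)^{−1/2}. Then the number of real solutions of f_Y(y) = κ is at most a₂ A² + a₁ A + a₀ − 1, where a₂ = 9e + 6√e + 5, a₁ = 6e + 2√e, and a₀ = e + 2·log(4√e + 2) + 1. -/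
set_option maxHeartbeats 2000000

open MeasureTheory Real Metric



lemma factor_zeros : ∀ (S : Finset ℂ) (F : ℂ → ℂ), Differentiable ℂ F → (∀ z ∈ S, F z = 0) →
    ∃ G : ℂ → ℂ, Differentiable ℂ G ∧ ∀ z, F z = G z * ∏ a ∈ S, (z - a) := by
  intro S
  induction S using Finset.induction_on with
  | empty => intro F hF _; exact ⟨F, hF, by simp⟩
  | @insert a S' ha ih =>
    intro F hF hz
    have hFa : F a = 0 := hz a (Finset.mem_insert_self a S')
    have hd : Differentiable ℂ (dslope F a) := by
      rw [← differentiableOn_univ] at hF ⊢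
      exact (Complex.differentiableOn_dslope Filter.univ_mem).mpr hF
    have key : ∀ z, F z = dslope F a z * (z - a) := by
      intro z
      have h := sub_smul_dslope F a z
      rw [smul_eq_mul, hFa, sub_zero] at h
      rw [← h]; ring
    have hz' : ∀ z ∈ S', dslope F a z = 0 := by
      intro b hb
      have hba : b - a ≠ 0 := sub_ne_zero.2 fun h => ha (h ▸ hb)
      have h0 : dslope F a b * (b - a) = 0 := by
        rw [← key b]; exact hz b (Finset.mem_insert_of_mem hb)
      exact (mul_eq_zero.1 h0).resolve_right hba
    obtain ⟨G, hG, hGf⟩ := ih (dslope F a) hd hz'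
    refine ⟨G, hG, fun z => ?_⟩
    rw [key z, hGf z, Finset.prod_insert ha]; ring

lemma count_zeros_s9 (F : ℂ → ℂ) (hF : Differentiable ℂ F) (c : ℂ) (r R m M : ℝ)
    (hr : 0 < r) (hrR : r ≤ R) (hm : 0 < m) (hmc : m ≤ ‖F c‖)
    (hM : ∀ z : ℂ, ‖z - c‖ = R → ‖F z‖ ≤ M)
    (S : Finset ℂ) (hS : ∀ z ∈ S, ‖z - c‖ ≤ r ∧ F z = 0) :
    m * (R / r) ^ S.card ≤ M := by
  have hR : 0 < R := lt_of_lt_of_le hr hrR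
  obtain ⟨G, hG, hGf⟩ := factor_zeros S F hF (fun z hz => (hS z hz).2)
  set n := S.card with hn
  -- the Blaschke-type entire function
  set H : ℂ → ℂ := fun z => G z * ∏ a ∈ S, (((R : ℂ))^2 - (starRingEnd ℂ) (a - c) * (z - c))
    with hH
  have hHd : Differentiable ℂ H := by
    apply hG.mul
    apply Differentiable.fun_finsetProd
    intro a _
    apply Differentiable.const_sub
    exact (differentiable_id.sub_const c).const_mul _
  -- value at the center
  have hHc : ‖H c‖ = ‖G c‖ * (R^2)^n := by
    have h1 : ∀ a ∈ S, ((R:ℂ))^2 - (starRingEnd ℂ) (a - c) * (c - c) = ((R:ℂ))^2 := by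
      intro a _; simp
    rw [hH]
    simp only [norm_mul]
    rw [Finset.prod_congr rfl h1, Finset.prod_const, norm_pow]
    congr 2
    rw [← Complex.ofReal_pow, Complex.norm_real, Real.norm_of_nonneg (by positivity)]
  -- lower bound for G at center
  have hGc : m ≤ ‖G c‖ * r^n := by
    calc m ≤ ‖F c‖ := hmc
    _ = ‖G c‖ * ‖∏ a ∈ S, (c - a)‖ := by rw [hGf c, norm_mul]
    _ ≤ ‖G c‖ * r^n := by
        apply mul_le_mul_of_nonneg_left _ (norm_nonneg _)
        rw [norm_prod]
        calc ∏ a ∈ S, ‖c - a‖ ≤ ∏ a ∈ S, r := by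
              apply Finset.prod_le_prod (fun a _ => norm_nonneg _)
              intro a haS
              rw [← norm_neg, neg_sub]
              exact (hS a haS).1
        _ = r^n := Finset.prod_const r
  -- on the sphere, ‖H z‖ = R^n * ‖F z‖ ≤ R^n * M
  have hsphere : ∀ z : ℂ, ‖z - c‖ = R → ‖H z‖ ≤ R^n * M := by
    intro z hz
    have hfac : ∀ a ∈ S, ‖((R:ℂ))^2 - (starRingEnd ℂ) (a - c) * (z - c)‖ = R * ‖z - a‖ := by
      intro a _
      have hzc : (z - c) * (starRingEnd ℂ) (z - c) = ((R:ℂ))^2 := by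
        rw [Complex.mul_conj, Complex.normSq_eq_norm_sq, hz]; norm_cast
      have key : ((R:ℂ))^2 - (starRingEnd ℂ) (a - c) * (z - c)
          = (z - c) * (starRingEnd ℂ) (z - a) := by
        rw [← hzc]
        have : (starRingEnd ℂ) (z - a) = (starRingEnd ℂ) (z - c) - (starRingEnd ℂ) (a - c) := by
          rw [← map_sub]; ring_nf
        rw [this]; ring
      rw [key, norm_mul, hz]
      congr 1
      rw [Complex.norm_conj]
    calc ‖H z‖ = ‖G z‖ * ∏ a ∈ S, ‖((R:ℂ))^2 - (starRingEnd ℂ) (a - c) * (z - c)‖ := by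
          rw [hH]; simp only [norm_mul, norm_prod]
    _ = ‖G z‖ * ∏ a ∈ S, (R * ‖z - a‖) := by rw [Finset.prod_congr rfl hfac]
    _ = R^n * (‖G z‖ * ∏ a ∈ S, ‖z - a‖) := by
          rw [Finset.prod_mul_distrib, Finset.prod_const]; ring
    _ = R^n * ‖F z‖ := by rw [hGf z, norm_mul, norm_prod]
    _ ≤ R^n * M := by
          apply mul_le_mul_of_nonneg_left (hM z hz) (by positivity)
  -- maximum modulus principle
  have hmax : ‖H c‖ ≤ R^n * M := by
    apply Complex.norm_le_of_forall_mem_frontier_norm_le (U := ball c R)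
      isBounded_ball hHd.diffContOnCl
    · intro z hzf
      rw [frontier_ball c hR.ne'] at hzf
      exact hsphere z (mem_sphere_iff_norm.1 hzf)
    · exact subset_closure (mem_ball_self hR)
  -- combine
  have hGc0 : 0 ≤ ‖G c‖ := norm_nonneg _
  have h1 : m * (R^2)^n ≤ ‖G c‖ * r^n * (R^2)^n := by
    apply mul_le_mul_of_nonneg_right hGc (by positivity)
  have h2 : ‖G c‖ * r^n * (R^2)^n = (‖G c‖ * (R^2)^n) * r^n := by ring
  have h3 : m * (R^2)^n ≤ (R^n * M) * r^n := by
    rw [h2] at h1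
    calc m * (R^2)^n ≤ (‖G c‖ * (R^2)^n) * r^n := h1
    _ ≤ (R^n * M) * r^n := by
        apply mul_le_mul_of_nonneg_right _ (by positivity)
        rw [← hHc]; exact hmax
  -- divide
  have hrn : (0:ℝ) < r^n := by positivity
  have hRn : (0:ℝ) < R^n := by positivity
  have hpow : (R^2)^n = R^n * R^n := by rw [sq, mul_pow]
  rw [hpow] at h3
  rw [div_pow, mul_div_assoc', div_le_iff₀ hrn]
  nlinarith [h3, hRn, hrn]

-- pointwise facts
lemma re_fact (x : ℝ) (z : ℂ) : (-(z - (x:ℂ))^2/2).re = (z.im^2 - (z.re - x)^2)/2 := by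
  simp [Complex.div_re, Complex.normSq, pow_two, Complex.mul_re, Complex.sub_re, Complex.sub_im,
    Complex.ofReal_re, Complex.ofReal_im]
  try ring

lemma norm_fact (x : ℝ) (z : ℂ) :
    ‖Complex.exp (-(z - (x:ℂ))^2/2)‖ = Real.exp ((z.im^2 - (z.re - x)^2)/2) := by
  rw [Complex.norm_exp, re_fact]

lemma deriv_fact (x : ℝ) (z : ℂ) :
    HasDerivAt (fun w : ℂ => Complex.exp (-(w - (x:ℂ))^2/2))
      (-(z - (x:ℂ)) * Complex.exp (-(z - (x:ℂ))^2/2)) z := by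
  have h1 : HasDerivAt (fun w : ℂ => -(w - (x:ℂ))^2/2) (-(z - (x:ℂ))) z := by
    have := (((hasDerivAt_id z).sub_const (x:ℂ)).pow 2).neg.div_const 2
    exact this.congr_deriv (by simp; ring)
  have := h1.cexp
  exact this.congr_deriv (by ring)

lemma cont_fact (z : ℂ) : Continuous (fun x : ℝ => Complex.exp (-(z - (x:ℂ))^2/2)) := by
  fun_prop

lemma cont_fact' (z : ℂ) : Continuous (fun x : ℝ => -(z - (x:ℂ)) * Complex.exp (-(z - (x:ℂ))^2/2)) := by
  fun_prop

lemma entire_int {Ω : Type*} [MeasurableSpace Ω] (μ : Measure Ω) [IsProbabilityMeasure μ]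
    (X : Ω → ℝ) (hX : Measurable X) (A : ℝ) (hA : 0 ≤ A) (hbd : ∀ᵐ ω ∂μ, |X ω| ≤ A) :
    Differentiable ℂ (fun z : ℂ => ∫ ω, Complex.exp (-(z - (X ω : ℂ))^2/2) ∂μ) := by
  intro z₀
  have key := hasDerivAt_integral_of_dominated_loc_of_deriv_le (μ := μ) (x₀ := z₀)
    (F := fun z ω => Complex.exp (-(z - (X ω : ℂ))^2/2))
    (F' := fun z ω => -(z - (X ω : ℂ)) * Complex.exp (-(z - (X ω : ℂ))^2/2))
    (bound := fun _ => (‖z₀‖ + 1 + A) * Real.exp ((|z₀.im| + 1)^2/2))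
    (s := ball z₀ 1) (ball_mem_nhds z₀ one_pos)
    (Filter.Eventually.of_forall fun z =>
      (((cont_fact z).measurable.comp hX)).aestronglyMeasurable)
    ?hint ?hmeas ?hbound ?hbint ?hdiff
  · exact key.2.differentiableAt
  case hint =>
    apply MeasureTheory.Integrable.mono' (g := fun _ => Real.exp (z₀.im^2/2))
      (integrable_const _)
      (((cont_fact z₀).measurable.comp hX)).aestronglyMeasurable
    apply Filter.Eventually.of_forall
    intro ω
    show ‖Complex.exp (-(z₀ - ((X ω : ℝ):ℂ))^2/2)‖ ≤ _
    rw [norm_fact]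
    apply Real.exp_le_exp.2
    have := sq_nonneg (z₀.re - X ω)
    linarith
  case hmeas => exact (((cont_fact' z₀).measurable.comp hX)).aestronglyMeasurable
  case hbound =>
    filter_upwards [hbd] with ω hω
    intro z hz
    rw [Metric.mem_ball, dist_eq_norm] at hz
    rw [norm_mul, norm_neg, norm_fact]
    have him : |z.im| ≤ |z₀.im| + 1 := by
      have h1 : |z.im - z₀.im| ≤ ‖z - z₀‖ := by
        have := Complex.abs_im_le_norm (z - z₀)
        simpa using this
      calc |z.im| = |z₀.im + (z.im - z₀.im)| := by ring_nf
      _ ≤ |z₀.im| + |z.im - z₀.im| := abs_add_le _ _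
      _ ≤ |z₀.im| + 1 := by linarith [h1, le_of_lt hz]
    have hnorm : ‖z - (X ω : ℂ)‖ ≤ ‖z₀‖ + 1 + A := by
      calc ‖z - (X ω : ℂ)‖ ≤ ‖z‖ + ‖((X ω : ℝ) : ℂ)‖ := norm_sub_le _ _
      _ ≤ (‖z₀‖ + 1) + A := by
          have h1 : ‖z‖ ≤ ‖z₀‖ + 1 := by
            calc ‖z‖ = ‖z₀ + (z - z₀)‖ := by ring_nf
            _ ≤ ‖z₀‖ + ‖z - z₀‖ := norm_add_le _ _
            _ ≤ ‖z₀‖ + 1 := by linarith [le_of_lt hz]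
          have h2 : ‖((X ω : ℝ) : ℂ)‖ = |X ω| := by
            rw [Complex.norm_real, Real.norm_eq_abs]
          linarith [h2 ▸ hω]
      _ = ‖z₀‖ + 1 + A := by ring
    apply mul_le_mul hnorm _ (Real.exp_nonneg _) (by positivity)
    apply Real.exp_le_exp.2
    have h2 : z.im^2 ≤ (|z₀.im| + 1)^2 := by
      have := sq_abs z.im
      nlinarith [him, abs_nonneg z.im]
    nlinarith [sq_nonneg (z.re - X ω)]
  case hbint => exact integrable_const _
  case hdiff =>
    apply Filter.Eventually.of_forall
    intro ω z _
    exact deriv_fact (X ω) z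
lemma final_numeric (A L l2 u e s lg : ℝ) (hA : 1 ≤ A) (hL0 : 0 ≤ L)
    (hLA : L ≤ l2 + 2*(A-1)) (hu0 : 0 ≤ u) (hu2 : u^2 = 1 + 2*l2 + L)
    (he_lo : 2.7182 ≤ e) (he_hi : e ≤ 2.7183) (hs_lo : 1.64 ≤ s)
    (hl2_lo : 0.6931 ≤ l2) (hl2_hi : l2 ≤ 0.6932) (hlg : 2 ≤ lg) :
    2*e*(A+u)^2 + 2 + 2*L + 8*l2 ≤ (9*e+6*s+5)*A^2 + (6*e+2*s)*A + (e + 2*lg + 1) - 1 := by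
  have h1 : 0 ≤ A*(u-1)^2 := mul_nonneg (by linarith) (sq_nonneg _)
  have h2 : 2*A*u ≤ A*(u^2+1) := by nlinarith
  have h3 : u^2 ≤ 2*A + 1.0796 := by nlinarith
  have hA2 : 1 ≤ A^2 := by nlinarith
  nlinarith [sq_nonneg (A+u), sq_nonneg (A-1), mul_nonneg (sub_nonneg.2 hA) (sub_nonneg.2 hA),
    mul_le_mul_of_nonneg_right he_hi (sq_nonneg (A+u)),
    mul_le_mul_of_nonneg_left h3 (by linarith : (0:ℝ) ≤ A)]


/-- for `A ≥ 1`, zero-mean `X` with `|X| ≤ A` a.s., and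
`(2πe(1+A²))^{−1/2} ≤ κ ≤ (2πe)^{−1/2}`, the number of real solutions of `f_Y(y) = κ`
is finite and at most `a₂A² + a₁A + a₀ − 1` with `a₂ = 9e + 6√e + 5`, `a₁ = 6e + 2√e`,
`a₀ = e + 2 log(4√e + 2) + 1`. -/
theorem stmt_9 {Ω : Type*} [MeasurableSpace Ω] (μ : Measure Ω) [IsProbabilityMeasure μ]
    (X : Ω → ℝ) (hXmeas : Measurable X) (A : ℝ) (hA : 1 ≤ A)
    (hmean : ∫ ω, X ω ∂μ = 0)
    (hbd : ∀ᵐ ω ∂μ, |X ω| ≤ A)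
    (fY : ℝ → ℝ)
    (hfY : ∀ y : ℝ, fY y = (1 / Real.sqrt (2 * π)) * ∫ ω, Real.exp (-(y - X ω) ^ 2 / 2) ∂μ)
    (κ : ℝ)
    (hκlo : 1 / Real.sqrt (2 * π * Real.exp 1 * (1 + A ^ 2)) ≤ κ)
    (hκhi : κ ≤ 1 / Real.sqrt (2 * π * Real.exp 1)) :
    {y : ℝ | fY y = κ}.Finite ∧
    ({y : ℝ | fY y = κ}.ncard : ℝ) ≤
      (9 * Real.exp 1 + 6 * Real.sqrt (Real.exp 1) + 5) * A ^ 2 +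
      (6 * Real.exp 1 + 2 * Real.sqrt (Real.exp 1)) * A +
      (Real.exp 1 + 2 * Real.log (4 * Real.sqrt (Real.exp 1) + 2) + 1) - 1 := by
  classical
  have hπ : 0 < π := Real.pi_pos
  have hsq2π : 0 < Real.sqrt (2*π) := Real.sqrt_pos.2 (by positivity)
  have hlog2 : 0 < Real.log 2 := Real.log_pos (by norm_num)
  set L := Real.log (1 + A^2) with hLdef
  have hL0 : 0 ≤ L := Real.log_nonneg (by nlinarith)
  have hargpos : 0 < 1 + 2*Real.log 2 + L := by positivity
  set u := Real.sqrt (1 + 2*Real.log 2 + L) with hudef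
  have hu0 : 0 ≤ u := Real.sqrt_nonneg _
  have hu2 : u^2 = 1 + 2*Real.log 2 + L := Real.sq_sqrt (le_of_lt hargpos)
  set c := A + u with hcdef
  have hc0 : 0 < c := by linarith
  set R := Real.sqrt (Real.exp 1) * c with hRdef
  have hse1 : 1 ≤ Real.sqrt (Real.exp 1) :=
    (Real.le_sqrt (by norm_num) (Real.exp_nonneg 1)).2 (by nlinarith [Real.exp_one_gt_d9])
  have hcR : c ≤ R := by rw [hRdef]; nlinarith
  have hR0 : 0 < R := lt_of_lt_of_le hc0 hcR
  have hR2 : R^2 = Real.exp 1 * c^2 := by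
    rw [hRdef, mul_pow, Real.sq_sqrt (Real.exp_nonneg 1)]
  have hκpos : 0 < κ := lt_of_lt_of_le (by positivity) hκlo
  clear_value L u c R
  -- sqrt identity
  have hsqrt_id : Real.sqrt (2*π*Real.exp 1*(1+A^2)) = Real.sqrt (2*π) * Real.exp ((1+L)/2) := by
    have h2 : (Real.exp ((1+L)/2))^2 = Real.exp 1 * (1+A^2) := by
      rw [sq, ← Real.exp_add, show (1+L)/2 + (1+L)/2 = 1 + L by ring, Real.exp_add,
        hLdef, Real.exp_log (by positivity)]
    have h : 2*π*Real.exp 1*(1+A^2) = (2*π) * (Real.exp ((1+L)/2))^2 := by rw [h2]; ring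
    rw [h, Real.sqrt_mul (by positivity), Real.sqrt_sq (Real.exp_nonneg _)]
  have hκlo' : Real.exp (-(1+L)/2) / Real.sqrt (2*π) ≤ κ := by
    have he : 1 / Real.sqrt (2*π*Real.exp 1*(1+A^2)) = Real.exp (-(1+L)/2)/Real.sqrt (2*π) := by
      rw [hsqrt_id, show -(1+L)/2 = -((1+L)/2) by ring, Real.exp_neg]
      field_simp
    linarith [he ▸ hκlo]
  -- integrability of real integrand
  have hcontR : ∀ y : ℝ, Continuous (fun x : ℝ => Real.exp (-(y - x)^2/2)) := by
    intro y; fun_prop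
  have hintR : ∀ y : ℝ, Integrable (fun ω => Real.exp (-(y - X ω)^2/2)) μ := by
    intro y
    apply Integrable.mono' (integrable_const 1)
      (((hcontR y).measurable.comp hXmeas).aestronglyMeasurable)
    apply Filter.Eventually.of_forall
    intro ω
    show ‖Real.exp (-(y - X ω)^2/2)‖ ≤ 1
    rw [Real.norm_eq_abs, abs_of_pos (Real.exp_pos _)]
    calc Real.exp (-(y - X ω)^2/2) ≤ Real.exp 0 :=
          Real.exp_le_exp.2 (by nlinarith [sq_nonneg (y - X ω)])
    _ = 1 := Real.exp_zero
  -- tail bound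
  have htail : ∀ y : ℝ, A ≤ |y| → fY y ≤ Real.exp (-((|y| - A)^2)/2) / Real.sqrt (2*π) := by
    intro y hy
    rw [hfY y]
    have hmono : ∫ ω, Real.exp (-(y - X ω)^2/2) ∂μ ≤ Real.exp (-((|y|-A)^2)/2) := by
      calc ∫ ω, Real.exp (-(y - X ω)^2/2) ∂μ
          ≤ ∫ _ω, Real.exp (-((|y|-A)^2)/2) ∂μ := by
            apply integral_mono_ae (hintR y) (integrable_const _)
            filter_upwards [hbd] with ω hω
            apply Real.exp_le_exp.2
            have h1 : |y| - A ≤ |y - X ω| := by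
              have := abs_sub_abs_le_abs_sub y (X ω); linarith
            have h2 : (|y|-A)^2 ≤ (y - X ω)^2 := by
              rw [← sq_abs (y - X ω)]
              apply pow_le_pow_left₀ (by linarith) h1
            linarith
      _ = Real.exp (-((|y|-A)^2)/2) := by simp [measure_univ]
    calc (1/Real.sqrt (2*π)) * ∫ ω, Real.exp (-(y - X ω)^2/2) ∂μ
        ≤ (1/Real.sqrt (2*π)) * Real.exp (-((|y|-A)^2)/2) :=
          mul_le_mul_of_nonneg_left hmono (by positivity)
    _ = Real.exp (-((|y|-A)^2)/2) / Real.sqrt (2*π) := by ring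
  -- on and beyond the circle of radius c the density is ≤ κ/2
  have htail2 : ∀ y : ℝ, c ≤ |y| → fY y ≤ κ/2 := by
    intro y hy
    have hAy : A ≤ |y| := le_trans (by linarith) hy
    have h1 := htail y hAy
    have hmono : Real.exp (-((|y|-A)^2)/2) ≤ Real.exp (-(u^2)/2) := by
      apply Real.exp_le_exp.2
      have h2 : u ≤ |y| - A := by rw [hcdef] at hy; linarith
      nlinarith
    have e1 : Real.exp (-(u^2)/2) = Real.exp (-(1+L)/2) / 2 := by
      rw [show -(u^2)/2 = -(1+L)/2 + -Real.log 2 from by rw [hu2]; ring,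
        Real.exp_add, Real.exp_neg, Real.exp_log (by norm_num : (0:ℝ) < 2)]
      ring
    have h3 : fY y ≤ (Real.exp (-(1+L)/2) / Real.sqrt (2*π)) / 2 := by
      calc fY y ≤ Real.exp (-((|y|-A)^2)/2) / Real.sqrt (2*π) := h1
      _ ≤ Real.exp (-(u^2)/2) / Real.sqrt (2*π) := by
          gcongr
      _ = (Real.exp (-(1+L)/2) / Real.sqrt (2*π)) / 2 := by rw [e1]; ring
    linarith
  have hloc : ∀ y : ℝ, fY y = κ → |y| ≤ c := by
    intro y hy
    by_contra h
    push_neg at h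
    have := htail2 y (le_of_lt h)
    rw [hy] at this
    linarith
  -- the entire function
  set F : ℂ → ℂ := fun z =>
    ((1/Real.sqrt (2*π) : ℝ) : ℂ) * ∫ ω, Complex.exp (-(z - (X ω:ℂ))^2/2) ∂μ - (κ:ℂ) with hFdef
  have hFd : Differentiable ℂ F :=
    ((entire_int μ X hXmeas A (by linarith) hbd).const_mul _).sub_const _
  have hFreal : ∀ y : ℝ, F (y:ℂ) = ((fY y - κ : ℝ) : ℂ) := by
    intro y
    have hcast : (fun ω => Complex.exp (-((y:ℂ) - (X ω:ℂ))^2/2))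
        = fun ω => ((Real.exp (-(y - X ω)^2/2) : ℝ) : ℂ) := by
      funext ω
      rw [Complex.ofReal_exp]
      congr 1
      push_cast
      ring
    have hio : (∫ ω, ((Real.exp (-(y - X ω)^2/2) : ℝ) : ℂ) ∂μ)
        = ((∫ ω, Real.exp (-(y - X ω)^2/2) ∂μ : ℝ) : ℂ) := integral_ofReal
    rw [hFdef]
    simp only
    rw [hcast, hio, hfY y]
    push_cast
    ring
  -- upper bound on circles centered at real points
  set Mv := (Real.exp (R^2/2) + 1)/Real.sqrt (2*π) with hMvdef
  have hMb : ∀ c₀ : ℝ, ∀ z : ℂ, ‖z - ((c₀:ℝ):ℂ)‖ = R → ‖F z‖ ≤ Mv := by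
    intro c₀ z hz
    have him : |z.im| ≤ R := by
      have h1 : |(z - (c₀:ℂ)).im| ≤ ‖z - (c₀:ℂ)‖ := by
        simpa using Complex.abs_im_le_norm (z - (c₀:ℂ))
      rw [hz] at h1
      simpa [Complex.sub_im, Complex.ofReal_im] using h1
    have hintb : ‖∫ ω, Complex.exp (-(z - (X ω:ℂ))^2/2) ∂μ‖ ≤ Real.exp (R^2/2) := by
      have key := norm_integral_le_of_norm_le_const (μ := μ)
        (f := fun ω => Complex.exp (-(z - (X ω:ℂ))^2/2)) (C := Real.exp (R^2/2)) ?_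
      · simpa [measure_univ] using key
      · apply Filter.Eventually.of_forall
        intro ω
        rw [norm_fact]
        apply Real.exp_le_exp.2
        have h2 : z.im^2 ≤ R^2 := by nlinarith [sq_abs z.im, abs_nonneg z.im, him, hR0]
        nlinarith [sq_nonneg (z.re - X ω)]
    have hκ1 : κ ≤ 1/Real.sqrt (2*π) := by
      refine le_trans hκhi ?_
      apply one_div_le_one_div_of_le hsq2π
      apply Real.sqrt_le_sqrt
      nlinarith [Real.exp_one_gt_d9]
    calc ‖F z‖ ≤ ‖((1/Real.sqrt (2*π) : ℝ):ℂ) * ∫ ω, Complex.exp (-(z - (X ω:ℂ))^2/2) ∂μ‖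
          + ‖(κ:ℂ)‖ := norm_sub_le _ _
    _ = (1/Real.sqrt (2*π)) * ‖∫ ω, Complex.exp (-(z - (X ω:ℂ))^2/2) ∂μ‖ + κ := by
        rw [norm_mul, Complex.norm_real, Complex.norm_real, Real.norm_eq_abs,
          Real.norm_eq_abs, abs_of_pos (by positivity), abs_of_pos hκpos]
    _ ≤ (1/Real.sqrt (2*π)) * Real.exp (R^2/2) + 1/Real.sqrt (2*π) := by
        have := mul_le_mul_of_nonneg_left hintb (le_of_lt (show (0:ℝ) < 1/Real.sqrt (2*π) by positivity))
        linarith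
    _ = Mv := by rw [hMvdef]; ring
  -- lower bound at the centers
  have hcent : ∀ c₀ : ℝ, |c₀| = c → κ/2 ≤ ‖F (c₀:ℂ)‖ := by
    intro c₀ h
    rw [hFreal c₀, Complex.norm_real, Real.norm_eq_abs]
    have h1 : fY c₀ ≤ κ/2 := htail2 c₀ (le_of_eq h.symm)
    calc κ/2 ≤ -(fY c₀ - κ) := by linarith
    _ ≤ |fY c₀ - κ| := neg_le_abs _
  clear_value F Mv
  -- counting in each half-disk
  have hcount_half : ∀ (c₀ : ℝ), |c₀| = c → ∀ S : Finset ℝ,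
      (∀ y ∈ S, fY y = κ ∧ ‖((y:ℝ):ℂ) - ((c₀:ℝ):ℂ)‖ ≤ c) →
      (S.card : ℝ) ≤ Real.exp 1 * c^2 + 1 + L + 4*Real.log 2 := by
    intro c₀ hc₀ S hs
    have himg := count_zeros_s9 F hFd ((c₀:ℝ):ℂ) c R (κ/2) Mv hc0 hcR (by positivity)
      (hcent c₀ hc₀) (hMb c₀) (S.image (fun y : ℝ => (y:ℂ))) ?_
    swap
    · intro z hz
      obtain ⟨y, hy, rfl⟩ := Finset.mem_image.1 hz
      refine ⟨(hs y hy).2, ?_⟩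
      rw [hFreal, (hs y hy).1]
      simp
    have hcard : (S.image (fun y : ℝ => (y:ℂ))).card = S.card :=
      Finset.card_image_of_injective S Complex.ofReal_injective
    rw [hcard] at himg
    have hRc : R / c = Real.sqrt (Real.exp 1) := by
      rw [hRdef]; field_simp
    rw [hRc] at himg
    have hsqe : Real.sqrt (Real.exp 1) = Real.exp (1/2 : ℝ) := by
      rw [show Real.exp 1 = (Real.exp (1/2 : ℝ))^2 from by
        rw [sq, ← Real.exp_add]; norm_num, Real.sqrt_sq (Real.exp_nonneg _)]
    rw [hsqe, ← Real.exp_nat_mul] at himg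
    -- himg : κ/2 * Real.exp (S.card * (1/2)) ≤ Mv
    have hκinv : 1/κ ≤ Real.sqrt (2*π) * Real.exp ((1+L)/2) := by
      rw [← hsqrt_id]
      calc 1/κ ≤ 1/(1 / Real.sqrt (2*π*Real.exp 1*(1+A^2))) :=
            one_div_le_one_div_of_le (by positivity) hκlo
      _ = Real.sqrt (2*π*Real.exp 1*(1+A^2)) := one_div_one_div _
    have hMvle : Mv ≤ 2*Real.exp (R^2/2)/Real.sqrt (2*π) := by
      rw [hMvdef]
      have h1 : Real.exp (R^2/2) + 1 ≤ 2*Real.exp (R^2/2) := by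
        linarith [Real.one_le_exp (show (0:ℝ) ≤ R^2/2 by positivity)]
      gcongr
    have hfinal : Real.exp ((S.card : ℝ) * (1/2)) ≤
        Real.exp (R^2/2 + (1+L)/2 + 2*Real.log 2) := by
      have h2 : Real.exp ((S.card:ℝ) * (1/2)) ≤ Mv * (2/κ) := by
        rw [show Mv * (2/κ) = Mv / (κ/2) from by field_simp]
        exact (le_div_iff₀ (by positivity)).2 (by linarith [himg])
      have h3 : Mv * (2/κ) ≤ (2*Real.exp (R^2/2)/Real.sqrt (2*π)) *
          (2 * (Real.sqrt (2*π) * Real.exp ((1+L)/2))) := by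
        apply mul_le_mul hMvle _ (by positivity) (by positivity)
        rw [show (2:ℝ)/κ = 2 * (1/κ) from by ring]
        exact mul_le_mul_of_nonneg_left hκinv (by norm_num)
      have h4 : (2*Real.exp (R^2/2)/Real.sqrt (2*π)) *
          (2 * (Real.sqrt (2*π) * Real.exp ((1+L)/2)))
          = Real.exp (R^2/2 + (1+L)/2 + 2*Real.log 2) := by
        rw [Real.exp_add, Real.exp_add,
          show Real.exp (2*Real.log 2) = 4 from by
            rw [two_mul, Real.exp_add, Real.exp_log (by norm_num : (0:ℝ) < 2)]; norm_num]
        field_simp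
        ring
      rw [h4] at h3
      linarith
    have h5 := Real.exp_le_exp.1 hfinal
    rw [hR2] at h5
    nlinarith [h5]
  -- combining two half-disks
  have hcount : ∀ S : Finset ℝ, ↑S ⊆ {y : ℝ | fY y = κ} →
      (S.card : ℝ) ≤ 2*Real.exp 1*c^2 + 2 + 2*L + 8*Real.log 2 := by
    intro S hST
    have hmem : ∀ y ∈ S, fY y = κ := fun y hy => hST hy
    have hsplit := Finset.card_filter_add_card_filter_not
      (s := S) (p := fun y : ℝ => 0 ≤ y)
    have hp := hcount_half c (abs_of_pos hc0) (S.filter (fun y => 0 ≤ y)) ?_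
    rotate_left
    · intro y hy
      have hyS := (Finset.mem_filter.1 hy).1
      have hy0 := (Finset.mem_filter.1 hy).2
      have hyT := hmem y hyS
      have hyc := hloc y hyT
      refine ⟨hyT, ?_⟩
      rw [show ((y:ℝ):ℂ) - ((c:ℝ):ℂ) = ((y - c : ℝ):ℂ) from by push_cast; ring,
        Complex.norm_real, Real.norm_eq_abs]
      rw [abs_le] at hyc ⊢
      constructor <;> linarith [hyc.1, hyc.2]
    have hm := hcount_half (-c) (by rw [abs_neg, abs_of_pos hc0]) (S.filter (fun y => ¬ 0 ≤ y)) ?_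
    rotate_left
    · intro y hy
      have hyS := (Finset.mem_filter.1 hy).1
      have hy0 := (Finset.mem_filter.1 hy).2
      push_neg at hy0
      have hyT := hmem y hyS
      have hyc := hloc y hyT
      refine ⟨hyT, ?_⟩
      rw [show ((y:ℝ):ℂ) - ((-c:ℝ):ℂ) = ((y + c : ℝ):ℂ) from by push_cast; ring,
        Complex.norm_real, Real.norm_eq_abs]
      rw [abs_le] at hyc ⊢
      constructor <;> linarith [hyc.1, hyc.2]
    have hc1 : ((S.filter (fun y : ℝ => 0 ≤ y)).card : ℝ)
        + ((S.filter (fun y : ℝ => ¬ 0 ≤ y)).card : ℝ) = (S.card : ℝ) := by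
      exact_mod_cast congrArg (Nat.cast : ℕ → ℝ) hsplit
    linarith
  -- conclusion
  set T := {y : ℝ | fY y = κ} with hTdef
  set B := 2*Real.exp 1*c^2 + 2 + 2*L + 8*Real.log 2 with hBdef
  clear_value T B
  have hfin : T.Finite := by
    by_contra hinf
    have hinf' : T.Infinite := hinf
    obtain ⟨t, hts, htfin, htcard⟩ := hinf'.exists_subset_ncard_eq (Nat.ceil B + 1)
    have hle := hcount htfin.toFinset (by rw [Set.Finite.coe_toFinset]; exact hts)
    have hcardeq : t.ncard = htfin.toFinset.card := Set.ncard_eq_toFinset_card t htfin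
    rw [← hcardeq, htcard] at hle
    push_cast at hle
    have := Nat.le_ceil B
    linarith
  refine ⟨hfin, ?_⟩
  have hle := hcount hfin.toFinset (by rw [Set.Finite.coe_toFinset])
  have hcardeq : T.ncard = hfin.toFinset.card := Set.ncard_eq_toFinset_card T hfin
  rw [hcardeq]
  -- final numeric bound
  have hLA : L ≤ Real.log 2 + 2*(A-1) := by
    have h1 : (1:ℝ)+A^2 ≤ 2*A^2 := by nlinarith
    have h2 : L ≤ Real.log (2*A^2) := by
      rw [hLdef]; exact Real.log_le_log (by positivity) h1
    rw [Real.log_mul (by norm_num) (by positivity), Real.log_pow] at h2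
    have h3 : Real.log A ≤ A - 1 := by
      have := Real.log_le_sub_one_of_pos (show (0:ℝ) < A by linarith)
      linarith
    push_cast at h2
    linarith
  have hs_lo : (1.64:ℝ) ≤ Real.sqrt (Real.exp 1) := by
    rw [Real.le_sqrt (by norm_num) (Real.exp_nonneg 1)]
    nlinarith [Real.exp_one_gt_d9]
  have hlg : (2:ℝ) ≤ Real.log (4*Real.sqrt (Real.exp 1) + 2) := by
    rw [Real.le_log_iff_exp_le (by positivity)]
    have h1 : Real.exp 2 = Real.exp 1 * Real.exp 1 := by
      rw [← Real.exp_add]; norm_num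
    nlinarith [Real.exp_one_lt_d9, hs_lo]
  have hnum := final_numeric A L (Real.log 2) u (Real.exp 1) (Real.sqrt (Real.exp 1))
    (Real.log (4*Real.sqrt (Real.exp 1) + 2)) hA hL0 hLA hu0 hu2
    (by nlinarith [Real.exp_one_gt_d9]) (by nlinarith [Real.exp_one_lt_d9]) hs_lo
    (by nlinarith [Real.log_two_gt_d9]) (by nlinarith [Real.log_two_lt_d9]) hlg
  have hcc : 2*Real.exp 1*c^2 = 2*Real.exp 1*(A+u)^2 := by rw [hcdef]
  linarith [hle, hnum, hcc]
end
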